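/- (Optimistic first-order general formula.) For any general source X and any ε, δ ∈ [0,1) satisfying ε + δ < 1, it holds that R*(ε,δ|X) = G*_{ε,δ}(X). -/

import Mathlib

open Filter MeasureTheory

namespace NY

/-- A probability distribution on a set, given by its point mass function. -/
structure Dist (α : Type*) where
  p : α → ℝ
  nonneg : ∀ x, 0 ≤ p x
  hasSum : HasSum p 1

/-- The probability of a set under a distribution. -/
noncomputable def Dist.pr {α : Type*} (P : Dist α) (A : Set α) : ℝ := ∑' x : A, P.p x.1

/-- 𝒰* : nonempty finite strings over the code alphabet 𝒰 = {1,…,K}. -/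
abbrev Word (K : ℕ) := {u : List (Fin K) // u ≠ []}

/-- Length of a string, as a real number. -/
noncomputable def wlen {K : ℕ} (u : Word K) : ℝ := u.1.length

/-- Error probability of a variable-length code (φ, ψ). -/
noncomputable def errP {α : Type*} {K : ℕ} (P : Dist α) (φ : α → Word K) (ψ : Word K → α) : ℝ :=
  P.pr {x | ψ (φ x) ≠ x}

/-- Overflow probability of an encoder φ with threshold η. -/
noncomputable def ovP {α : Type*} {K : ℕ} (P : Dist α) (φ : α → Word K) (η : ℝ) : ℝ :=
  P.pr {x | wlen (φ x) > η}

/-- A general source: for each blocklength n, a distribution on 𝒳^n. -/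
abbrev Source (𝒳 : Type*) := (n : ℕ) → Dist (Fin n → 𝒳)

/-- The limit as ν ↓ 0 of a function g which is nonincreasing in ν
(the limit exists by monotonicity and equals the supremum over ν > 0). -/
noncomputable def limNu (g : ℝ → ℝ) : ℝ := sSup (g '' Set.Ioi (0 : ℝ))

variable {𝒳 : Type*}

/-- A rate R ≥ 0 is (ε,δ)-achievable. -/
def FirstAch (K : ℕ) (X : Source 𝒳) (ε δ R : ℝ) : Prop :=
  0 ≤ R ∧ ∃ (φ : ∀ n, (Fin n → 𝒳) → Word K) (ψ : ∀ n, Word K → (Fin n → 𝒳)),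
    limsup (fun n => errP (X n) (φ n) (ψ n)) atTop ≤ ε ∧
    limsup (fun n => ovP (X n) (φ n) ((n : ℝ) * R)) atTop ≤ δ

/-- The first-order (ε,δ)-optimum threshold R(ε,δ|X). -/
noncomputable def Ropt (K : ℕ) (X : Source 𝒳) (ε δ : ℝ) : ℝ :=
  sInf {R | FirstAch K X ε δ R}

/-- L is (ε,δ,R)-achievable (second order). -/
def SecondAch (K : ℕ) (X : Source 𝒳) (ε δ R L : ℝ) : Prop :=
  ∃ (φ : ∀ n, (Fin n → 𝒳) → Word K) (ψ : ∀ n, Word K → (Fin n → 𝒳)),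
    limsup (fun n => errP (X n) (φ n) (ψ n)) atTop ≤ ε ∧
    limsup (fun n => ovP (X n) (φ n) ((n : ℝ) * R + Real.sqrt (n : ℝ) * L)) atTop ≤ δ

/-- The second-order (ε,δ,R)-optimum threshold L(ε,δ,R|X). -/
noncomputable def Lopt (K : ℕ) (X : Source 𝒳) (ε δ R : ℝ) : ℝ :=
  sInf {L | SecondAch K X ε δ R L}

/-- A rate R ≥ 0 is optimistically (ε,δ)-achievable. -/
def OptFirstAch (K : ℕ) (X : Source 𝒳) (ε δ R : ℝ) : Prop :=
  0 ≤ R ∧ ∃ (φ : ∀ n, (Fin n → 𝒳) → Word K) (ψ : ∀ n, Word K → (Fin n → 𝒳)),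
    ∀ γ > (0 : ℝ), ∃ ns : ℕ → ℕ, StrictMono ns ∧ ∀ i,
      errP (X (ns i)) (φ (ns i)) (ψ (ns i)) ≤ ε + γ ∧
      ovP (X (ns i)) (φ (ns i)) ((ns i : ℝ) * R) ≤ δ + γ

/-- The optimistic first-order (ε,δ)-optimum threshold R*(ε,δ|X). -/
noncomputable def RoptStar (K : ℕ) (X : Source 𝒳) (ε δ : ℝ) : ℝ :=
  sInf {R | OptFirstAch K X ε δ R}

/-- L is optimistically (ε,δ,R)-achievable. -/
def OptSecondAch (K : ℕ) (X : Source 𝒳) (ε δ R L : ℝ) : Prop :=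
  ∃ (φ : ∀ n, (Fin n → 𝒳) → Word K) (ψ : ∀ n, Word K → (Fin n → 𝒳)),
    ∀ γ > (0 : ℝ), ∃ ns : ℕ → ℕ, StrictMono ns ∧ ∀ i,
      errP (X (ns i)) (φ (ns i)) (ψ (ns i)) ≤ ε + γ ∧
      ovP (X (ns i)) (φ (ns i)) ((ns i : ℝ) * R + Real.sqrt (ns i : ℝ) * L) ≤ δ + γ

/-- The optimistic second-order (ε,δ,R)-optimum threshold L*(ε,δ,R|X). -/
noncomputable def LoptStar (K : ℕ) (X : Source 𝒳) (ε δ R : ℝ) : ℝ :=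
  sInf {L | OptSecondAch K X ε δ R L}

/-- A rate R ≥ 0 is type I (ε,δ)-achievable. -/
def TypeIAch (K : ℕ) (X : Source 𝒳) (ε δ R : ℝ) : Prop :=
  0 ≤ R ∧ ∃ (φ : ∀ n, (Fin n → 𝒳) → Word K) (ψ : ∀ n, Word K → (Fin n → 𝒳)),
    limsup (fun n => errP (X n) (φ n) (ψ n)) atTop ≤ ε ∧
    liminf (fun n => ovP (X n) (φ n) ((n : ℝ) * R)) atTop ≤ δ

/-- R†(ε,δ|X). -/
noncomputable def Rdagger (K : ℕ) (X : Source 𝒳) (ε δ : ℝ) : ℝ :=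
  sInf {R | TypeIAch K X ε δ R}

/-- A rate R ≥ 0 is type II (ε,δ)-achievable. -/
def TypeIIAch (K : ℕ) (X : Source 𝒳) (ε δ R : ℝ) : Prop :=
  0 ≤ R ∧ ∃ (φ : ∀ n, (Fin n → 𝒳) → Word K) (ψ : ∀ n, Word K → (Fin n → 𝒳)),
    liminf (fun n => errP (X n) (φ n) (ψ n)) atTop ≤ ε ∧
    limsup (fun n => ovP (X n) (φ n) ((n : ℝ) * R)) atTop ≤ δ

/-- R‡(ε,δ|X). -/
noncomputable def Rddagger (K : ℕ) (X : Source 𝒳) (ε δ : ℝ) : ℝ :=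
  sInf {R | TypeIIAch K X ε δ R}

/-- H̄_γ(X) := inf{ R : limsup_n Pr{ (1/n) log(1/P_{X^n}(X^n)) > R } ≤ γ }. -/
noncomputable def Hbar (K : ℕ) (X : Source 𝒳) (γ : ℝ) : ℝ :=
  sInf {R | limsup (fun n =>
    (X n).pr {x | Real.logb (K : ℝ) (1 / (X n).p x) / (n : ℝ) > R}) atTop ≤ γ}

/-- H̄*_γ(X) (optimistic version, with liminf). -/
noncomputable def HbarStar (K : ℕ) (X : Source 𝒳) (γ : ℝ) : ℝ :=
  sInf {R | liminf (fun n =>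
    (X n).pr {x | Real.logb (K : ℝ) (1 / (X n).p x) / (n : ℝ) > R}) atTop ≤ γ}

/-- H̄_γ(R|X) := inf{ L : limsup_n Pr{ (1/n) log(1/P_{X^n}(X^n)) > R + L/√n } ≤ γ }. -/
noncomputable def Hbar2 (K : ℕ) (X : Source 𝒳) (γ R : ℝ) : ℝ :=
  sInf {L | limsup (fun n =>
    (X n).pr {x | Real.logb (K : ℝ) (1 / (X n).p x) / (n : ℝ)
      > R + L / Real.sqrt (n : ℝ)}) atTop ≤ γ}

/-- H̄*_γ(R|X) (optimistic version, with liminf). -/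
noncomputable def Hbar2Star (K : ℕ) (X : Source 𝒳) (γ R : ℝ) : ℝ :=
  sInf {L | liminf (fun n =>
    (X n).pr {x | Real.logb (K : ℝ) (1 / (X n).p x) / (n : ℝ)
      > R + L / Real.sqrt (n : ℝ)}) atTop ≤ γ}

/-- F(ε,R) := limsup_n inf_{A : Pr(A) ≥ 1−ε} Pr{ −(1/n) log P_{X^n}(X^n) ≥ R, X^n ∈ A }. -/
noncomputable def Fspec (K : ℕ) (X : Source 𝒳) (ε R : ℝ) : ℝ :=
  limsup (fun n =>
    sInf ((fun A : Set (Fin n → 𝒳) =>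
        (X n).pr (A ∩ {x | -Real.logb (K : ℝ) ((X n).p x) / (n : ℝ) ≥ R})) ''
      {A | (X n).pr A ≥ 1 - ε})) atTop

/-- H̃_{ε,δ}(X) := inf{ R : F(ε,R) ≤ δ }. -/
noncomputable def Htilde (K : ℕ) (X : Source 𝒳) (ε δ : ℝ) : ℝ :=
  sInf {R | Fspec K X ε R ≤ δ}

/-- G_{ε,δ}(X). -/
noncomputable def Gfirst (K : ℕ) (X : Source 𝒳) (ε δ : ℝ) : ℝ :=
  sInf {R | limNu (fun ν => limsup (fun n =>
    sInf ((fun A : Set (Fin n → 𝒳) =>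
        (X n).pr (A ∩ {x | -Real.logb (K : ℝ) ((X n).p x / (X n).pr A) / (n : ℝ) ≥ R})) ''
      {A | (X n).pr A ≥ 1 - ε - ν})) atTop) ≤ δ}

/-- G*_{ε,δ}(X) (optimistic version, with liminf). -/
noncomputable def GfirstStar (K : ℕ) (X : Source 𝒳) (ε δ : ℝ) : ℝ :=
  sInf {R | limNu (fun ν => liminf (fun n =>
    sInf ((fun A : Set (Fin n → 𝒳) =>
        (X n).pr (A ∩ {x | -Real.logb (K : ℝ) ((X n).p x / (X n).pr A) / (n : ℝ) ≥ R})) ''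
      {A | (X n).pr A ≥ 1 - ε - ν})) atTop) ≤ δ}

/-- G_{ε,δ}(R|X). -/
noncomputable def Gsecond (K : ℕ) (X : Source 𝒳) (ε δ R : ℝ) : ℝ :=
  sInf {L | limNu (fun ν => limsup (fun n =>
    sInf ((fun A : Set (Fin n → 𝒳) =>
        (X n).pr (A ∩ {x | -Real.logb (K : ℝ) ((X n).p x / (X n).pr A) / (n : ℝ)
          ≥ R + L / Real.sqrt (n : ℝ)})) ''
      {A | (X n).pr A ≥ 1 - ε - ν})) atTop) ≤ δ}

/-- G*_{ε,δ}(R|X) (optimistic version, with liminf). -/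
noncomputable def GsecondStar (K : ℕ) (X : Source 𝒳) (ε δ R : ℝ) : ℝ :=
  sInf {L | limNu (fun ν => liminf (fun n =>
    sInf ((fun A : Set (Fin n → 𝒳) =>
        (X n).pr (A ∩ {x | -Real.logb (K : ℝ) ((X n).p x / (X n).pr A) / (n : ℝ)
          ≥ R + L / Real.sqrt (n : ℝ)})) ''
      {A | (X n).pr A ≥ 1 - ε - ν})) atTop) ≤ δ}

/-- A rate R is optimistically ε-achievable by fixed-length codes. -/
def FixAchR (K : ℕ) (X : Source 𝒳) (ε R : ℝ) : Prop :=
  ∃ (M : ℕ → ℕ) (φ : ∀ n, (Fin n → 𝒳) → Fin (M n)) (ψ : ∀ n, Fin (M n) → (Fin n → 𝒳)),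
    ∀ γ > (0 : ℝ), ∃ ns : ℕ → ℕ, StrictMono ns ∧ ∀ i,
      (X (ns i)).pr {x | ψ (ns i) (φ (ns i) x) ≠ x} ≤ ε + γ ∧
      Real.logb (K : ℝ) (M (ns i) : ℝ) / (ns i : ℝ) ≤ R + γ

/-- R^f(ε|X). -/
noncomputable def Rfix (K : ℕ) (X : Source 𝒳) (ε : ℝ) : ℝ :=
  sInf {R | FixAchR K X ε R}

/-- A real L is optimistically (ε,R)-achievable by fixed-length codes. -/
def FixAchL (K : ℕ) (X : Source 𝒳) (ε R L : ℝ) : Prop :=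
  ∃ (M : ℕ → ℕ) (φ : ∀ n, (Fin n → 𝒳) → Fin (M n)) (ψ : ∀ n, Fin (M n) → (Fin n → 𝒳)),
    ∀ γ > (0 : ℝ), ∃ ns : ℕ → ℕ, StrictMono ns ∧ ∀ i,
      (X (ns i)).pr {x | ψ (ns i) (φ (ns i) x) ≠ x} ≤ ε + γ ∧
      Real.logb (K : ℝ) ((M (ns i) : ℝ) / (K : ℝ) ^ ((ns i : ℝ) * R)) / Real.sqrt (ns i : ℝ)
        ≤ L + γ

/-- L^f(ε,R|X). -/
noncomputable def Lfix (K : ℕ) (X : Source 𝒳) (ε R : ℝ) : ℝ :=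
  sInf {L | FixAchL K X ε R L}


/-! ### Auxiliary machinery for statement14 -/

section Infra
variable {α : Type*} (P : Dist α)

lemma Dist.summable : Summable P.p := P.hasSum.summable

lemma Dist.pr_eq (A : Set α) : P.pr A = ∑' x, A.indicator P.p x := tsum_subtype A P.p

lemma indicator_nonneg' (A : Set α) (x : α) : 0 ≤ A.indicator P.p x :=
  Set.indicator_nonneg (fun y _ => P.nonneg y) x

lemma Dist.summable_ind (A : Set α) : Summable (A.indicator P.p) :=
  P.summable.indicator A

lemma Dist.pr_nonneg (A : Set α) : 0 ≤ P.pr A := by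
  rw [Dist.pr_eq]
  exact tsum_nonneg (indicator_nonneg' P A)

lemma Dist.pr_mono {A B : Set α} (h : A ⊆ B) : P.pr A ≤ P.pr B := by
  rw [Dist.pr_eq, Dist.pr_eq]
  refine Summable.tsum_le_tsum (fun x => ?_) (P.summable_ind A) (P.summable_ind B)
  exact Set.indicator_le_indicator_of_subset h (fun y => P.nonneg y) x

lemma Dist.pr_univ : P.pr Set.univ = 1 := by
  rw [Dist.pr_eq]
  simp only [Set.indicator_univ]
  exact P.hasSum.tsum_eq

lemma Dist.pr_le_one (A : Set α) : P.pr A ≤ 1 := by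
  rw [← P.pr_univ]; exact P.pr_mono (Set.subset_univ A)

lemma Dist.pr_compl (A : Set α) : P.pr Aᶜ = 1 - P.pr A := by
  have h : HasSum (A.indicator P.p) (P.pr A) := by
    rw [Dist.pr_eq]; exact (P.summable_ind A).hasSum
  have h2 : HasSum (Aᶜ.indicator P.p) (1 - P.pr A) := by
    have := P.hasSum.sub h
    have e : (fun x => P.p x - A.indicator P.p x) = Aᶜ.indicator P.p := by
      funext x
      by_cases hx : x ∈ A <;> simp [Set.indicator_of_mem, Set.indicator_of_notMem, hx]
    rwa [e] at this
  rw [Dist.pr_eq]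
  exact h2.tsum_eq

lemma Dist.pr_union_le (A B : Set α) : P.pr (A ∪ B) ≤ P.pr A + P.pr B := by
  rw [Dist.pr_eq, Dist.pr_eq, Dist.pr_eq]
  rw [← Summable.tsum_add (P.summable_ind A) (P.summable_ind B)]
  refine Summable.tsum_le_tsum (fun x => ?_) (P.summable_ind _)
    ((P.summable_ind A).add (P.summable_ind B))
  by_cases hA : x ∈ A <;> by_cases hB : x ∈ B <;>
    simp [Set.indicator_of_mem, Set.indicator_of_notMem, hA, hB, P.nonneg x,
      Set.mem_union]

lemma Dist.pr_support (A : Set α) : P.pr A = P.pr (A ∩ {x | P.p x ≠ 0}) := by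
  rw [Dist.pr_eq, Dist.pr_eq]
  congr 1
  funext x
  by_cases hx : x ∈ A
  · by_cases hp : P.p x = 0
    · by_cases hm : x ∈ A ∩ {x | P.p x ≠ 0} <;>
        simp_all [Set.indicator_of_mem, Set.indicator_of_notMem]
    · have : x ∈ A ∩ {x | P.p x ≠ 0} := ⟨hx, hp⟩
      simp [Set.indicator_of_mem, hx, this]
  · have : x ∉ A ∩ {x | P.p x ≠ 0} := fun h => hx h.1
    simp [Set.indicator_of_notMem, hx, this]

lemma Dist.single_le_pr {A : Set α} {x : α} (hx : x ∈ A) : P.p x ≤ P.pr A := by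
  unfold Dist.pr
  exact Summable.le_tsum (P.summable.subtype A) (⟨x, hx⟩ : A) (fun j _ => P.nonneg j.1)

lemma Dist.pr_le_card_mul {A : Set α} (hA : A.Finite) {b : ℝ}
    (hb : ∀ x ∈ A, P.p x ≤ b) : P.pr A ≤ (Nat.card A) * b := by
  unfold Dist.pr
  have : Fintype A := hA.fintype
  rw [tsum_fintype, Nat.card_eq_fintype_card, ← Finset.card_univ]
  have h := Finset.sum_le_card_nsmul (Finset.univ : Finset A) (fun x => P.p x.1) b
    (fun x _ => hb x.1 x.2)
  simpa [nsmul_eq_mul] using h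

lemma Dist.card_mul_le_pr {A : Set α} (hA : A.Finite) {c : ℝ}
    (hc : ∀ x ∈ A, c ≤ P.p x) : (Nat.card A) * c ≤ P.pr A := by
  unfold Dist.pr
  have : Fintype A := hA.fintype
  rw [tsum_fintype, Nat.card_eq_fintype_card, ← Finset.card_univ]
  have h := Finset.card_nsmul_le_sum (Finset.univ : Finset A) (fun x => P.p x.1) c
    (fun x _ => hc x.1 x.2)
  simpa [nsmul_eq_mul] using h

lemma Dist.nonempty' (hα : Dist α) : Nonempty α := by
  by_contra h
  have : IsEmpty α := not_nonempty_iff.mp h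
  have := hα.hasSum.unique hasSum_empty
  norm_num at this

lemma summable_finite_of_lt {c : ℝ} (hc : 0 < c) :
    {x : α | c < P.p x}.Finite := by
  have h := P.summable.tendsto_cofinite_zero
  have := h.eventually_lt_const hc
  rw [Filter.eventually_cofinite] at this
  exact this.subset (fun x hx => by simp only [Set.mem_setOf_eq] at hx ⊢; linarith [hx])

end Infra

section Words

/-- Base-K value of a word with a leading 1 appended, giving an injective map to ℕ. -/
def wordVal (K : ℕ) (w : List (Fin K)) : ℕ := Nat.ofDigits K (w.map Fin.val ++ [1])

lemma wordVal_inj {K : ℕ} (hK : 2 ≤ K) : Function.Injective (wordVal K) := by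
  intro w1 w2 h
  have hb : 1 < K := hK
  have digs : ∀ w : List (Fin K), Nat.digits K (wordVal K w) = w.map Fin.val ++ [1] := by
    intro w
    refine Nat.digits_ofDigits K hb _ ?_ ?_
    · intro l hl
      rcases List.mem_append.mp hl with h' | h'
      · obtain ⟨a, _, rfl⟩ := List.mem_map.mp h'
        exact lt_of_lt_of_le a.2 le_rfl
      · simp at h'; omega
    · intro h
      simp [List.getLast_append]
  have := (digs w1).symm.trans ((congrArg (Nat.digits K) h).trans (digs w2))
  have := List.append_cancel_right this
  exact List.map_injective_iff.mpr Fin.val_injective this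

lemma wordVal_lt {K : ℕ} (hK : 2 ≤ K) (w : List (Fin K)) :
    wordVal K w < K ^ (w.length + 1) := by
  have hb : 1 < K := hK
  have := Nat.ofDigits_lt_base_pow_length (b := K) (l := w.map Fin.val ++ [1]) hb ?_
  · simpa [wordVal] using this
  · intro l hl
    rcases List.mem_append.mp hl with h' | h'
    · obtain ⟨a, _, rfl⟩ := List.mem_map.mp h'
      exact a.2
    · simp at h'; omega

end Words

section Sfun

noncomputable def sfun (K : ℕ) (X : Source 𝒳) (ε R νv : ℝ) (n : ℕ) : ℝ :=
  sInf ((fun A : Set (Fin n → 𝒳) =>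
      (X n).pr (A ∩ {x | -Real.logb (K : ℝ) ((X n).p x / (X n).pr A) / (n : ℝ) ≥ R})) ''
    {A | (X n).pr A ≥ 1 - ε - νv})

def Gset (K : ℕ) (X : Source 𝒳) (ε δ : ℝ) : Set ℝ :=
  {R | limNu (fun νv => liminf (fun n => sfun K X ε R νv n) atTop) ≤ δ}

variable {K : ℕ} {X : Source 𝒳} {ε δ : ℝ}

lemma univ_mem_coll {ν : ℝ} (hεν : 0 ≤ ε + ν) (n : ℕ) :
    (Set.univ : Set (Fin n → 𝒳)) ∈ {A : Set (Fin n → 𝒳) | (X n).pr A ≥ 1 - ε - ν} := by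
  rw [Set.mem_setOf_eq, (X n).pr_univ]
  linarith

lemma sfun_img_nonempty {ν : ℝ} (hεν : 0 ≤ ε + ν) (R : ℝ) (n : ℕ) :
    ((fun A : Set (Fin n → 𝒳) =>
      (X n).pr (A ∩ {x | -Real.logb (K : ℝ) ((X n).p x / (X n).pr A) / (n : ℝ) ≥ R})) ''
    {A | (X n).pr A ≥ 1 - ε - ν}).Nonempty :=
  ⟨_, Set.mem_image_of_mem _ (univ_mem_coll hεν n)⟩

lemma sfun_img_nonneg (R ν : ℝ) (n : ℕ) : ∀ b ∈ ((fun A : Set (Fin n → 𝒳) =>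
      (X n).pr (A ∩ {x | -Real.logb (K : ℝ) ((X n).p x / (X n).pr A) / (n : ℝ) ≥ R})) ''
    {A | (X n).pr A ≥ 1 - ε - ν}), 0 ≤ b := by
  rintro b ⟨A, _, rfl⟩
  exact (X n).pr_nonneg _

lemma sfun_nonneg (R ν : ℝ) (n : ℕ) : 0 ≤ sfun K X ε R ν n :=
  Real.sInf_nonneg (sfun_img_nonneg R ν n)

lemma sfun_le_one {ν : ℝ} (hεν : 0 ≤ ε + ν) (R : ℝ) (n : ℕ) :
    sfun K X ε R ν n ≤ 1 :=
  csInf_le_of_le ⟨0, sfun_img_nonneg R ν n⟩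
    (Set.mem_image_of_mem _ (univ_mem_coll hεν n)) ((X n).pr_le_one _)

lemma sfun_lower (hK : 2 ≤ K) {ν R : ℝ} (hεν : 0 ≤ ε + ν) (hν : 1 - ε - ν > 0)
    (hR : R ≤ 0) (n : ℕ) : 1 - ε - ν ≤ sfun K X ε R ν n := by
  refine le_csInf (sfun_img_nonempty hεν R n) ?_
  rintro b ⟨A, hA, rfl⟩
  rw [Set.mem_setOf_eq] at hA
  have hApos : 0 < (X n).pr A := lt_of_lt_of_le hν hA
  refine le_trans hA ?_
  calc (X n).pr A = (X n).pr (A ∩ {x | (X n).p x ≠ 0}) := (X n).pr_support A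
    _ ≤ _ := by
      refine (X n).pr_mono (fun x hx => ⟨hx.1, ?_⟩)
      have hpx : 0 < (X n).p x := lt_of_le_of_ne ((X n).nonneg x) (Ne.symm hx.2)
      have hle : (X n).p x ≤ (X n).pr A := (X n).single_le_pr hx.1
      have hratio : (X n).p x / (X n).pr A ≤ 1 := (div_le_one hApos).mpr hle
      have hlogb : Real.logb (K : ℝ) ((X n).p x / (X n).pr A) ≤ 0 :=
        Real.logb_nonpos (by exact_mod_cast hK) (by positivity) hratio
      have : 0 ≤ -Real.logb (K : ℝ) ((X n).p x / (X n).pr A) / (n : ℝ) :=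
        div_nonneg (by linarith) (Nat.cast_nonneg n)
      exact le_trans hR this

lemma Gset_pos (hK : 2 ≤ K) (hε0 : 0 ≤ ε) (hδ0 : 0 ≤ δ) (hεδ : ε + δ < 1)
    {R : ℝ} (hR : R ∈ Gset K X ε δ) : 0 < R := by
  by_contra h
  push_neg at h
  set ν₀ : ℝ := (1 - ε - δ)/2 with hν₀
  have hν₀pos : 0 < ν₀ := by simp [hν₀]; linarith
  have hsmall : 1 - ε - ν₀ > 0 := by simp [hν₀]; linarith
  have hbddA : ∀ ν ∈ Set.Ioi (0:ℝ),
      liminf (fun n => sfun K X ε R ν n) atTop ≤ 1 := by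
    intro ν hν
    refine liminf_le_of_frequently_le (Frequently.of_forall
      (fun n => sfun_le_one (by linarith [hν.out]) R n)) ?_
    exact ⟨0, eventually_map.mpr (Eventually.of_forall (fun n => sfun_nonneg R ν n))⟩
  have hkey : 1 - ε - ν₀ ≤ liminf (fun n => sfun K X ε R ν₀ n) atTop := by
    refine le_liminf_of_le ?_
      (Eventually.of_forall (fun n => sfun_lower hK (by linarith) hsmall h n))
    exact (isBoundedUnder_of ⟨1, fun n => sfun_le_one (by linarith) R n⟩).isCoboundedUnder_ge
  have hle : liminf (fun n => sfun K X ε R ν₀ n) atTop ≤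
      limNu (fun ν => liminf (fun n => sfun K X ε R ν n) atTop) := by
    refine le_csSup ⟨1, ?_⟩ (Set.mem_image_of_mem _ hν₀pos)
    rintro b ⟨ν, hν, rfl⟩
    exact hbddA ν hν
  have := hR
  rw [Gset, Set.mem_setOf_eq] at this
  have : (1 : ℝ) - ε - ν₀ ≤ δ := by linarith
  rw [hν₀] at this
  linarith

end Sfun

section Converse

variable {K : ℕ} {X : Source 𝒳} {ε δ : ℝ}

/-- The single-blocklength converse estimate. -/
lemma conv_single (hK : 2 ≤ K) {R R' γ ν : ℝ} (hR0 : 0 ≤ R) (hγν : γ ≤ ν)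
    (hγε : 1 - ε - γ > 0) {n : ℕ} (hn : 1 ≤ n)
    {φn : (Fin n → 𝒳) → Word K} {ψn : Word K → (Fin n → 𝒳)}
    (herr : errP (X n) φn ψn ≤ ε + γ) (hov : ovP (X n) φn ((n : ℝ) * R) ≤ δ + γ) :
    sfun K X ε R' ν n ≤ (δ + γ) + (K : ℝ) ^ ((1 : ℝ) - (n : ℝ) * (R' - R)) := by
  have hKR : (1 : ℝ) < (K : ℝ) := by exact_mod_cast hK
  have hK0 : (0 : ℝ) < (K : ℝ) := by positivity
  have hnpos : (0 : ℝ) < (n : ℝ) := by exact_mod_cast hn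
  set P := X n
  set D : Set (Fin n → 𝒳) := {x | ψn (φn x) = x} with hDdef
  have hDc : P.pr D = 1 - errP P φn ψn := by
    have : D = {x | ψn (φn x) ≠ x}ᶜ := by
      ext x; simp [hDdef]
    rw [this, P.pr_compl]; rfl
  have hDge : P.pr D ≥ 1 - ε - γ := by rw [hDc]; linarith
  have hDpos : 0 < P.pr D := lt_of_lt_of_le hγε hDge
  set E : Set (Fin n → 𝒳) :=
    {x | -Real.logb (K : ℝ) (P.p x / P.pr D) / (n : ℝ) ≥ R'} with hEdef
  have hinj : ∀ x ∈ D, ∀ y ∈ D, φn x = φn y → x = y := by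
    intro x hx y hy hxy
    have : ψn (φn x) = ψn (φn y) := by rw [hxy]
    rwa [hx, hy] at this
  set m : ℕ := ⌊(n : ℝ) * R⌋₊ with hm
  set S : Set (Fin n → 𝒳) := D ∩ E ∩ {x | wlen (φn x) ≤ (n : ℝ) * R} with hSdef
  have hSf : ∀ x ∈ S, wordVal K (φn x).1 < K ^ (m + 1) := by
    intro x hx
    have hlen : (φn x).1.length ≤ m := by
      apply Nat.le_floor
      exact_mod_cast hx.2
    calc wordVal K (φn x).1 < K ^ ((φn x).1.length + 1) := wordVal_lt hK _
      _ ≤ K ^ (m + 1) := Nat.pow_le_pow_right (by omega) (by omega)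
  have hSinj : Function.Injective (fun x : S => (⟨wordVal K (φn x.1).1, hSf x.1 x.2⟩ :
      Fin (K ^ (m + 1)))) := by
    intro x y hxy
    simp only [Fin.mk.injEq] at hxy
    have := wordVal_inj hK hxy
    exact Subtype.ext (hinj x.1 x.2.1.1 y.1 y.2.1.1 (Subtype.ext this))
  have hSfin : Finite S := Finite.of_injective _ hSinj
  have hScard : Nat.card S ≤ K ^ (m + 1) := by
    have := Nat.card_le_card_of_injective _ hSinj
    simpa using this
  set b : ℝ := (K : ℝ) ^ (-((n : ℝ) * R')) with hb
  have hbpos : 0 < b := Real.rpow_pos_of_pos hK0 _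
  have hpt : ∀ x ∈ S, P.p x ≤ b := by
    intro x hx
    by_cases hp : P.p x = 0
    · rw [hp]; exact hbpos.le
    · have hppos : 0 < P.p x := lt_of_le_of_ne (P.nonneg x) (Ne.symm hp)
      have hE := hx.1.2
      rw [hEdef, Set.mem_setOf_eq, ge_iff_le, le_div_iff₀ hnpos] at hE
      have hlogb : Real.logb (K : ℝ) (P.p x / P.pr D) ≤ -((n : ℝ) * R') := by
        nlinarith
      have hdivpos : 0 < P.p x / P.pr D := div_pos hppos hDpos
      have := (Real.logb_le_iff_le_rpow hKR hdivpos).mp hlogb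
      rw [div_le_iff₀ hDpos] at this
      calc P.p x ≤ (K : ℝ) ^ (-((n : ℝ) * R')) * P.pr D := this
        _ ≤ b * 1 := by
          rw [hb]
          exact mul_le_mul_of_nonneg_left (P.pr_le_one D) hbpos.le
        _ = b := mul_one b
  have hprS : P.pr S ≤ (K : ℝ) ^ ((1 : ℝ) - (n : ℝ) * (R' - R)) := by
    calc P.pr S ≤ (Nat.card S) * b := P.pr_le_card_mul (Set.toFinite S) hpt
      _ ≤ (K ^ (m + 1) : ℕ) * b := by
        apply mul_le_mul_of_nonneg_right _ hbpos.le
        exact_mod_cast hScard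
      _ ≤ (K : ℝ) ^ ((n : ℝ) * R + 1) * b := by
        apply mul_le_mul_of_nonneg_right _ hbpos.le
        push_cast
        rw [← Real.rpow_natCast (K : ℝ) (m + 1)]
        apply Real.rpow_le_rpow_of_exponent_le hKR.le
        push_cast
        have : (m : ℝ) ≤ (n : ℝ) * R := Nat.floor_le (by positivity)
        linarith
      _ = (K : ℝ) ^ ((1 : ℝ) - (n : ℝ) * (R' - R)) := by
        rw [hb, ← Real.rpow_add hK0]
        ring_nf
  have hmemD : D ∈ {A : Set (Fin n → 𝒳) | P.pr A ≥ 1 - ε - ν} := by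
    rw [Set.mem_setOf_eq]; linarith
  have h1 : sfun K X ε R' ν n ≤ P.pr (D ∩ E) :=
    csInf_le ⟨0, sfun_img_nonneg R' ν n⟩ (Set.mem_image_of_mem _ hmemD)
  have h2 : P.pr (D ∩ E) ≤ P.pr {x | wlen (φn x) > (n : ℝ) * R} + P.pr S := by
    refine le_trans (P.pr_mono (B := {x | wlen (φn x) > (n : ℝ) * R} ∪ S) ?_)
      (P.pr_union_le _ _)
    intro x hx
    by_cases hxl : wlen (φn x) ≤ (n : ℝ) * R
    · exact Or.inr ⟨hx, hxl⟩
    · exact Or.inl (lt_of_not_ge hxl)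
  have h3 : P.pr {x | wlen (φn x) > (n : ℝ) * R} ≤ δ + γ := hov
  linarith

lemma conv (hK : 2 ≤ K) (hδ0 : 0 ≤ δ) (hεδ : ε + δ < 1)
    {R : ℝ} (hR : OptFirstAch K X ε δ R) : ∀ R' > R, R' ∈ Gset K X ε δ := by
  intro R' hR'
  obtain ⟨hR0, φ, ψ, hcode⟩ := hR
  rw [Gset, Set.mem_setOf_eq]
  refine Real.sSup_le ?_ hδ0
  rintro bb ⟨ν, hν, rfl⟩
  rw [Set.mem_Ioi] at hν
  refine le_of_forall_pos_le_add (fun τ hτ => ?_)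
  set γ : ℝ := min (min ν (τ/2)) ((1-ε)/2) with hγ
  have hγpos : 0 < γ := by
    apply lt_min (lt_min hν (by linarith))
    linarith
  have hγν : γ ≤ ν := le_trans (min_le_left _ _) (min_le_left _ _)
  have hγτ : γ ≤ τ/2 := le_trans (min_le_left _ _) (min_le_right _ _)
  have hγε : 1 - ε - γ > 0 := by
    have : γ ≤ (1-ε)/2 := min_le_right _ _
    linarith
  obtain ⟨ns, hmono, hbounds⟩ := hcode γ hγpos
  have hdecay : Tendsto (fun nn : ℕ => (K : ℝ) ^ ((1:ℝ) - (nn : ℝ) * (R' - R)))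
      atTop (nhds 0) := by
    have hKR : (1 : ℝ) < (K : ℝ) := by exact_mod_cast hK
    have hK0 : (0 : ℝ) < (K : ℝ) := by positivity
    have hre : (fun nn : ℕ => (K : ℝ) ^ ((1:ℝ) - (nn : ℝ) * (R' - R)))
        = fun nn : ℕ => (K : ℝ) * ((K : ℝ) ^ (-(R' - R))) ^ nn := by
      funext nn
      rw [← Real.rpow_natCast ((K : ℝ) ^ (-(R' - R))) nn, ← Real.rpow_mul hK0.le,
        show (1:ℝ) - (nn:ℝ) * (R' - R) = 1 + -(R' - R) * (nn:ℝ) by ring,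
        Real.rpow_add hK0, Real.rpow_one]
    rw [hre]
    have hr1 : (K : ℝ) ^ (-(R' - R)) < 1 :=
      Real.rpow_lt_one_of_one_lt_of_neg hKR (by linarith)
    have hr0 : 0 ≤ (K : ℝ) ^ (-(R' - R)) := (Real.rpow_pos_of_pos hK0 _).le
    have := tendsto_pow_atTop_nhds_zero_of_lt_one hr0 hr1
    simpa using this.const_mul (K : ℝ)
  have hev : ∀ᶠ nn : ℕ in atTop, (K : ℝ) ^ ((1:ℝ) - (nn : ℝ) * (R' - R)) < τ/2 :=
    hdecay.eventually_lt_const (by linarith)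
  obtain ⟨N₁, hN₁⟩ := eventually_atTop.mp hev
  refine liminf_le_of_frequently_le ?_
    ⟨0, eventually_map.mpr (Eventually.of_forall (fun n => sfun_nonneg _ _ n))⟩
  rw [frequently_atTop]
  intro N
  set i := max (max N N₁) 1 with hi
  refine ⟨ns i, le_trans (le_trans (le_max_left _ _) (le_max_left _ _)) hmono.le_apply, ?_⟩
  have hni : 1 ≤ ns i := le_trans (le_trans (le_max_right _ _) hmono.le_apply) le_rfl
  have hNi : N₁ ≤ ns i :=
    le_trans (le_trans (le_max_right _ _) (le_max_left _ _)) hmono.le_apply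
  obtain ⟨herr, hov⟩ := hbounds i
  calc sfun K X ε R' ν (ns i)
      ≤ (δ + γ) + (K : ℝ) ^ ((1:ℝ) - ((ns i : ℕ) : ℝ) * (R' - R)) :=
        conv_single hK hR0 hγν hγε hni herr hov
    _ ≤ δ + τ := by
        have := (hN₁ (ns i) hNi).le
        linarith

end Converse

section Achievability

attribute [local instance] Classical.propDecidable

noncomputable def someInj (β γ : Type*) (d : β → γ) : β → γ :=
  if h : ∃ f : β → γ, Function.Injective f then h.choose else d

lemma someInj_inj {β γ : Type*} {d : β → γ} (h : ∃ f : β → γ, Function.Injective f) :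
    Function.Injective (someInj β γ d) := by
  rw [someInj, dif_pos h]; exact h.choose_spec

noncomputable def Bset (K : ℕ) (X : Source 𝒳) (R : ℝ) (n : ℕ) (A : Set (Fin n → 𝒳)) :
    Set (Fin n → 𝒳) :=
  A ∩ {x | (X n).pr A * (K : ℝ) ^ (-((n : ℝ) * R)) < (X n).p x}

noncomputable def mlen (R : ℝ) (n : ℕ) : ℕ := ⌊(n : ℝ) * R⌋₊ + 1

noncomputable def buildφ (K : ℕ) (hK : 2 ≤ K) (X : Source 𝒳) (R : ℝ) (n : ℕ)
    (A : Set (Fin n → 𝒳)) : (Fin n → 𝒳) → Word K := fun x =>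
  if hx : x ∈ Bset K X R n A then
    ⟨⟨0, by omega⟩ :: List.ofFn (someInj (Bset K X R n A) (Fin (mlen R n) → Fin K)
        (fun _ _ => ⟨0, by omega⟩) ⟨x, hx⟩), by simp⟩
  else if x ∈ A then
    ⟨⟨1, by omega⟩ :: List.replicate (someInj (Fin n → 𝒳) ℕ (fun _ => 0) x + 1)
        ⟨0, by omega⟩, by simp⟩
  else ⟨[⟨0, by omega⟩], by simp⟩

noncomputable def buildψ (K : ℕ) (hK : 2 ≤ K) (X : Source 𝒳) (R : ℝ) (n : ℕ)
    (A : Set (Fin n → 𝒳)) (hne : Nonempty 𝒳) : Word K → (Fin n → 𝒳) := fun w =>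
  if h : ∃ x, x ∈ A ∧ buildφ K hK X R n A x = w then h.choose
  else (fun _ => Classical.choice hne)

variable [Countable 𝒳] {K : ℕ} (hK : 2 ≤ K) (X : Source 𝒳) {R : ℝ} {n : ℕ}
  {A : Set (Fin n → 𝒳)}

lemma buildφ_injOn
    (hcard : ∃ f : Bset K X R n A → (Fin (mlen R n) → Fin K), Function.Injective f) :
    Set.InjOn (buildφ K hK X R n A) A := by
  intro x hx y hy hxy
  by_cases hxB : x ∈ Bset K X R n A <;> by_cases hyB : y ∈ Bset K X R n A
  · simp only [buildφ, dif_pos hxB, dif_pos hyB, Subtype.mk.injEq, List.cons.injEq] at hxy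
    have := List.ofFn_injective hxy.2
    have := someInj_inj hcard this
    exact congrArg Subtype.val this
  · simp only [buildφ, dif_pos hxB, dif_neg hyB, if_pos hy, Subtype.mk.injEq,
      List.cons.injEq, Fin.mk.injEq] at hxy
    omega
  · simp only [buildφ, dif_pos hyB, dif_neg hxB, if_pos hx, Subtype.mk.injEq,
      List.cons.injEq, Fin.mk.injEq] at hxy
    omega
  · simp only [buildφ, dif_neg hxB, dif_neg hyB, if_pos hx, if_pos hy, Subtype.mk.injEq,
      List.cons.injEq, Fin.mk.injEq] at hxy
    have hlen := congrArg List.length hxy.2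
    simp only [List.length_replicate] at hlen
    have hNinj : ∃ f : (Fin n → 𝒳) → ℕ, Function.Injective f :=
      (countable_iff_exists_injective _).mp inferInstance
    exact someInj_inj (d := fun _ => 0) hNinj (by omega)

lemma buildψ_correct (hne : Nonempty 𝒳)
    (hcard : ∃ f : Bset K X R n A → (Fin (mlen R n) → Fin K), Function.Injective f) :
    ∀ x ∈ A, buildψ K hK X R n A hne (buildφ K hK X R n A x) = x := by
  intro x hx
  have h : ∃ y, y ∈ A ∧ buildφ K hK X R n A y = buildφ K hK X R n A x := ⟨x, hx, rfl⟩
  rw [buildψ, dif_pos h]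
  exact buildφ_injOn hK X hcard h.choose_spec.1 hx h.choose_spec.2

lemma wlen_B {x : Fin n → 𝒳} (hx : x ∈ Bset K X R n A) :
    wlen (buildφ K hK X R n A x) = (mlen R n : ℝ) + 1 := by
  rw [buildφ, wlen]
  simp only [hx, dif_pos, List.length_cons, List.length_ofFn]
  rw [mlen]
  push_cast
  ring

lemma wlen_nA {x : Fin n → 𝒳} (hxB : x ∉ Bset K X R n A) (hxA : x ∉ A) :
    wlen (buildφ K hK X R n A x) = 1 := by
  rw [buildφ, wlen]
  simp [hxB, hxA]

lemma build_err (hne : Nonempty 𝒳)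
    (hcard : ∃ f : Bset K X R n A → (Fin (mlen R n) → Fin K), Function.Injective f) :
    errP (X n) (buildφ K hK X R n A) (buildψ K hK X R n A hne) ≤ 1 - (X n).pr A := by
  rw [errP, ← (X n).pr_compl]
  refine (X n).pr_mono (fun x hx => ?_)
  intro hxA
  exact hx (buildψ_correct hK X hne hcard x hxA)

lemma build_ov {η : ℝ} (hR0 : 0 ≤ R) (hn1 : (1:ℝ) ≤ (n:ℝ) * (R + η))
    (hn2 : 2 ≤ (n:ℝ) * η) (hn : 1 ≤ n) (hK1 : (1:ℝ) < (K:ℝ)) (hne : Nonempty 𝒳) :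
    ovP (X n) (buildφ K hK X R n A) ((n:ℝ) * (R + η)) ≤
      (X n).pr (A ∩ {x | -Real.logb (K : ℝ) ((X n).p x / (X n).pr A) / (n : ℝ) ≥ R}) := by
  have hnpos : (0:ℝ) < (n:ℝ) := by exact_mod_cast hn
  have hK0 : (0:ℝ) < (K:ℝ) := by linarith
  rw [ovP]
  have hsub : {x | wlen (buildφ K hK X R n A x) > (n:ℝ) * (R + η)} ⊆ A \ Bset K X R n A := by
    intro x hx
    rw [Set.mem_setOf_eq] at hx
    by_cases hxB : x ∈ Bset K X R n A
    · exfalso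
      rw [wlen_B hK X hxB] at hx
      have hm : (mlen R n : ℝ) ≤ (n:ℝ) * R + 1 := by
        rw [mlen]
        push_cast
        have : (⌊(n : ℝ) * R⌋₊ : ℝ) ≤ (n:ℝ) * R := Nat.floor_le (by positivity)
        linarith
      nlinarith
    · by_cases hxA : x ∈ A
      · exact ⟨hxA, hxB⟩
      · exfalso
        rw [wlen_nA hK X hxB hxA] at hx
        linarith
  refine le_trans ((X n).pr_mono hsub) ?_
  rw [(X n).pr_support (A \ Bset K X R n A)]
  refine (X n).pr_mono (fun x hx => ?_)
  obtain ⟨⟨hxA, hxB⟩, hp⟩ := hx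
  refine ⟨hxA, ?_⟩
  have hppos : 0 < (X n).p x := lt_of_le_of_ne ((X n).nonneg x) (Ne.symm hp)
  have hnlt : ¬ ((X n).pr A * (K : ℝ) ^ (-((n : ℝ) * R)) < (X n).p x) :=
    fun hc => hxB ⟨hxA, hc⟩
  push_neg at hnlt
  have hApos : 0 < (X n).pr A := by
    by_contra hA
    push_neg at hA
    have : (X n).pr A * (K : ℝ) ^ (-((n : ℝ) * R)) ≤ 0 :=
      mul_nonpos_of_nonpos_of_nonneg hA (Real.rpow_pos_of_pos hK0 _).le
    linarith
  rw [Set.mem_setOf_eq, ge_iff_le, le_div_iff₀ hnpos]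
  have hdiv : (X n).p x / (X n).pr A ≤ (K : ℝ) ^ (-((n : ℝ) * R)) :=
    (div_le_iff₀ hApos).mpr (by linarith [mul_comm ((X n).pr A) ((K : ℝ) ^ (-((n : ℝ) * R)))])
  have hlogb : Real.logb (K : ℝ) ((X n).p x / (X n).pr A) ≤ -((n : ℝ) * R) := by
    have h2 := Real.logb_le_logb_of_le hK1 (div_pos hppos hApos) hdiv
    rwa [Real.logb_rpow hK0 (by linarith)] at h2
  linarith

lemma card_ex (hApos : 0 < (X n).pr A) (hR0 : 0 ≤ R) (hK1 : (1:ℝ) < (K:ℝ)) :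
    ∃ f : Bset K X R n A → (Fin (mlen R n) → Fin K), Function.Injective f := by
  have hK0 : (0:ℝ) < (K:ℝ) := by linarith
  set c : ℝ := (X n).pr A * (K : ℝ) ^ (-((n : ℝ) * R)) with hc
  have hcpos : 0 < c := mul_pos hApos (Real.rpow_pos_of_pos hK0 _)
  have hfin : (Bset K X R n A).Finite :=
    (summable_finite_of_lt (X n) hcpos).subset (fun x hx => hx.2)
  have hcardle : (Nat.card (Bset K X R n A) : ℝ) * c ≤ (X n).pr A := by
    refine le_trans ((X n).card_mul_le_pr hfin (fun x hx => hx.2.le)) ?_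
    exact (X n).pr_mono (fun x hx => hx.1)
  have hcard : (Nat.card (Bset K X R n A) : ℝ) < (K : ℝ) ^ (mlen R n : ℕ) := by
    have h1 : (Nat.card (Bset K X R n A) : ℝ) ≤ (K : ℝ) ^ ((n : ℝ) * R) := by
      have hrp : (0:ℝ) < (K : ℝ) ^ (-((n : ℝ) * R)) := Real.rpow_pos_of_pos hK0 _
      have h2 : (Nat.card (Bset K X R n A) : ℝ)
          ≤ (X n).pr A / ((X n).pr A * (K : ℝ) ^ (-((n : ℝ) * R))) :=
        (le_div_iff₀ (mul_pos hApos hrp)).mpr hcardle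
      calc (Nat.card (Bset K X R n A) : ℝ)
          ≤ (X n).pr A / ((X n).pr A * (K : ℝ) ^ (-((n : ℝ) * R))) := h2
        _ = ((K : ℝ) ^ (-((n : ℝ) * R)))⁻¹ := by field_simp
        _ = (K : ℝ) ^ ((n : ℝ) * R) := by rw [← Real.rpow_neg hK0.le, neg_neg]
    refine lt_of_le_of_lt h1 ?_
    rw [← Real.rpow_natCast (K:ℝ) (mlen R n)]
    apply Real.rpow_lt_rpow_of_exponent_lt hK1
    rw [mlen]
    push_cast
    exact lt_of_lt_of_le (Nat.lt_floor_add_one _) (by push_cast; linarith)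
  have hcardn : Nat.card (Bset K X R n A) < K ^ (mlen R n) := by
    have : ((K ^ (mlen R n) : ℕ) : ℝ) = (K : ℝ) ^ (mlen R n : ℕ) := by push_cast; rfl
    rw [← this] at hcard
    exact_mod_cast hcard
  have : Fintype (Bset K X R n A) := hfin.fintype
  have hembe : Nonempty ((Bset K X R n A) ↪ (Fin (mlen R n) → Fin K)) := by
    apply Function.Embedding.nonempty_of_card_le
    rw [← Nat.card_eq_fintype_card, Fintype.card_fun]
    simp only [Fintype.card_fin]
    omega
  obtain ⟨f⟩ := hembe
  exact ⟨f, f.injective⟩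

/-- generic diagonal sequence -/
noncomputable def tseq (Pk : ℕ → ℕ → Prop) (key : ∀ k N : ℕ, ∃ n, N ≤ n ∧ Pk k n)
    (N0 : ℕ) : ℕ → ℕ
  | 0 => (key 0 N0).choose
  | k+1 => (key (k+1) (max (tseq Pk key N0 k + 1) N0)).choose

lemma tseq_spec (Pk : ℕ → ℕ → Prop) (key : ∀ k N : ℕ, ∃ n, N ≤ n ∧ Pk k n) (N0 : ℕ) :
    (∀ k, N0 ≤ tseq Pk key N0 k ∧ Pk k (tseq Pk key N0 k)) ∧ StrictMono (tseq Pk key N0) := by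
  have h0 := (key 0 N0).choose_spec
  have hs : ∀ k, max (tseq Pk key N0 k + 1) N0 ≤ tseq Pk key N0 (k+1) ∧
      Pk (k+1) (tseq Pk key N0 (k+1)) := fun k =>
    (key (k+1) (max (tseq Pk key N0 k + 1) N0)).choose_spec
  have hmono : StrictMono (tseq Pk key N0) := by
    apply strictMono_nat_of_lt_succ
    intro k
    have := (hs k).1
    omega
  refine ⟨fun k => ?_, hmono⟩
  induction k with
  | zero => exact h0
  | succ k ih =>
    refine ⟨?_, (hs k).2⟩
    have := (hs k).1
    omega

noncomputable def levOf (t : ℕ → ℕ) (n : ℕ) : ℕ :=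
  if h : ∃ k, t k = n then h.choose else 0

lemma levOf_eq {t : ℕ → ℕ} (ht : Function.Injective t) (k : ℕ) : levOf t (t k) = k := by
  have h : ∃ k', t k' = t k := ⟨k, rfl⟩
  rw [levOf, dif_pos h]
  exact ht h.choose_spec

noncomputable def chooseA (K : ℕ) (X : Source 𝒳) (ε δ R : ℝ) (ρ : ℝ) (n : ℕ) :
    Set (Fin n → 𝒳) :=
  if h : ∃ A : Set (Fin n → 𝒳), (X n).pr A ≥ 1 - ε - ρ ∧
      (X n).pr (A ∩ {x | -Real.logb (K : ℝ) ((X n).p x / (X n).pr A) / (n : ℝ) ≥ R}) < δ + ρ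
  then h.choose else Set.univ

lemma chooseA_spec {K : ℕ} {X : Source 𝒳} {ε δ R ρ : ℝ} {n : ℕ}
    (h : ∃ A : Set (Fin n → 𝒳), (X n).pr A ≥ 1 - ε - ρ ∧
      (X n).pr (A ∩ {x | -Real.logb (K : ℝ) ((X n).p x / (X n).pr A) / (n : ℝ) ≥ R}) < δ + ρ) :
    (X n).pr (chooseA K X ε δ R ρ n) ≥ 1 - ε - ρ ∧
      (X n).pr (chooseA K X ε δ R ρ n ∩
        {x | -Real.logb (K : ℝ) ((X n).p x / (X n).pr (chooseA K X ε δ R ρ n)) / (n : ℝ) ≥ R})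
        < δ + ρ := by
  rw [chooseA, dif_pos h]
  exact h.choose_spec

variable {ε δ : ℝ}

lemma ach (hK : 2 ≤ K) (hε0 : 0 ≤ ε) (hδ0 : 0 ≤ δ) (hεδ : ε + δ < 1)
    {R : ℝ} (hRG : R ∈ Gset K X ε δ) (hRpos : 0 < R) :
    ∀ η > (0:ℝ), OptFirstAch K X ε δ (R + η) := by
  intro η hη
  have hK1 : (1:ℝ) < (K:ℝ) := by exact_mod_cast hK
  have hne : Nonempty 𝒳 := by
    obtain ⟨f⟩ := (X 1).nonempty'
    exact ⟨f 0⟩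
  set β : ℝ := (1 - ε - δ)/2 with hβ
  have hβpos : 0 < β := by rw [hβ]; linarith
  set ν : ℕ → ℝ := fun k => β / (k+1) with hν
  have hνpos : ∀ k, 0 < ν k := fun k => by positivity
  have hνβ : ∀ k, ν k ≤ β := by
    intro k
    rw [hν]
    apply div_le_of_le_mul₀ (by positivity) hβpos.le
    nlinarith [Nat.cast_nonneg (α := ℝ) k]
  have hRG' : sSup ((fun νv => liminf (fun n => sfun K X ε R νv n) atTop) ''
      Set.Ioi (0:ℝ)) ≤ δ := hRG
  have hglim : ∀ k, liminf (fun n => sfun K X ε R (ν k) n) atTop ≤ δ := by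
    intro k
    refine le_trans (le_csSup ⟨1, ?_⟩
      (Set.mem_image_of_mem (fun νv => liminf (fun n => sfun K X ε R νv n) atTop)
        (Set.mem_Ioi.mpr (hνpos k)))) hRG'
    rintro b ⟨ν', hν', rfl⟩
    rw [Set.mem_Ioi] at hν'
    refine liminf_le_of_frequently_le (Frequently.of_forall
      (fun n => sfun_le_one (by linarith) R n)) ?_
    exact ⟨0, eventually_map.mpr (Eventually.of_forall (fun n => sfun_nonneg R ν' n))⟩
  have key : ∀ k N : ℕ, ∃ n, N ≤ n ∧ ∃ A : Set (Fin n → 𝒳),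
      (X n).pr A ≥ 1 - ε - ν k ∧
      (X n).pr (A ∩ {x | -Real.logb (K : ℝ) ((X n).p x / (X n).pr A) / (n : ℝ) ≥ R})
        < δ + ν k := by
    intro k N
    have hlt : liminf (fun n => sfun K X ε R (ν k) n) atTop < δ + ν k :=
      lt_of_le_of_lt (hglim k) (by linarith [hνpos k])
    have hfreq := frequently_lt_of_liminf_lt
      (isBoundedUnder_of
        ⟨1, fun n => sfun_le_one (by linarith [hνpos k]) R n⟩).isCoboundedUnder_ge hlt
    rw [frequently_atTop] at hfreq
    obtain ⟨n, hnN, hn⟩ := hfreq N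
    refine ⟨n, hnN, ?_⟩
    obtain ⟨b, ⟨A, hA, rfl⟩, hb⟩ :=
      exists_lt_of_csInf_lt (sfun_img_nonempty (by linarith [hνpos k]) R n) hn
    exact ⟨A, hA, hb⟩
  set N0 : ℕ := ⌈2/η⌉₊ + 1 with hN0
  set t : ℕ → ℕ := tseq _ key N0 with ht
  obtain ⟨htspec, htmono⟩ := tseq_spec _ key N0
  set AA : ∀ n : ℕ, Set (Fin n → 𝒳) := fun n => chooseA K X ε δ R (ν (levOf t n)) n with hAA
  have hAAspec : ∀ k, (X (t k)).pr (AA (t k)) ≥ 1 - ε - ν k ∧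
      (X (t k)).pr (AA (t k) ∩
        {x | -Real.logb (K : ℝ) ((X (t k)).p x / (X (t k)).pr (AA (t k))) / ((t k : ℕ) : ℝ) ≥ R})
        < δ + ν k := by
    intro k
    have he : AA (t k) = chooseA K X ε δ R (ν k) (t k) := by
      rw [hAA]
      simp only [levOf_eq (t := t) htmono.injective k]
    rw [he]
    exact chooseA_spec ((htspec k).2)
  refine ⟨by linarith, fun n => buildφ K hK X R n (AA n),
    fun n => buildψ K hK X R n (AA n) hne, ?_⟩
  intro γ hγ
  obtain ⟨k₀, hk₀⟩ := exists_nat_gt (β/γ)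
  have hνk₀ : ∀ k, k₀ ≤ k → ν k ≤ γ := by
    intro k hk
    rw [hν]
    rw [div_le_iff₀ (by positivity)]
    rw [div_lt_iff₀ hγ] at hk₀
    have : (k₀:ℝ) ≤ (k:ℝ) := by exact_mod_cast hk
    nlinarith
  refine ⟨fun i => t (k₀ + i), htmono.comp (fun i j hij => by omega), ?_⟩
  intro i
  set k := k₀ + i with hk
  set n := t k with hn
  have hνγ : ν k ≤ γ := hνk₀ k (by omega)
  have hνsmall : 1 - ε - ν k > 0 := by
    have := hνβ k
    rw [hβ] at this
    linarith
  have hApr := (hAAspec k).1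
  have hApos : 0 < (X n).pr (AA n) := lt_of_lt_of_le hνsmall hApr
  have hcard := card_ex X hApos hRpos.le hK1
  have hnN0 : N0 ≤ n := (htspec k).1
  have hn1 : 1 ≤ n := by omega
  have hn2 : 2 ≤ (n:ℝ) * η := by
    have h2η : 2/η ≤ (N0 : ℝ) := by
      rw [hN0]
      push_cast
      linarith [Nat.le_ceil (2/η)]
    have hnn : (N0:ℝ) ≤ (n:ℝ) := by exact_mod_cast hnN0
    rw [div_le_iff₀ hη] at h2η
    nlinarith
  have hn1' : (1:ℝ) ≤ (n:ℝ) * (R + η) := by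
    have : (0:ℝ) ≤ (n:ℝ) * R := by positivity
    nlinarith
  constructor
  · calc errP (X n) (buildφ K hK X R n (AA n)) (buildψ K hK X R n (AA n) hne)
        ≤ 1 - (X n).pr (AA n) := build_err hK X hne hcard
      _ ≤ ε + ν k := by linarith
      _ ≤ ε + γ := by linarith
  · calc ovP (X n) (buildφ K hK X R n (AA n)) ((n:ℝ) * (R + η))
        ≤ (X n).pr (AA n ∩
            {x | -Real.logb (K : ℝ) ((X n).p x / (X n).pr (AA n)) / (n : ℝ) ≥ R}) :=
          build_ov hK X hRpos.le hn1' hn2 hn1 hK1 hne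
      _ ≤ δ + γ := by linarith [(hAAspec k).2]

end Achievability

/-- optimistic first-order general formula R*(ε,δ|X) = G*_{ε,δ}(X). -/
theorem statement14 {𝒳 : Type*} [Countable 𝒳] (K : ℕ) (hK : 2 ≤ K) (X : Source 𝒳)
    (ε δ : ℝ) (hε0 : 0 ≤ ε) (hε1 : ε < 1) (hδ0 : 0 ≤ δ) (hδ1 : δ < 1) (hεδ : ε + δ < 1) :
    RoptStar K X ε δ = GfirstStar K X ε δ := by
  have hG : GfirstStar K X ε δ = sInf (Gset K X ε δ) := rfl
  set S1 := {R | OptFirstAch K X ε δ R} with hS1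
  by_cases h1 : S1.Nonempty
  · have h2 : (Gset K X ε δ).Nonempty := by
      obtain ⟨R, hR⟩ := h1
      exact ⟨R + 1, conv hK hδ0 hεδ hR (R+1) (by linarith)⟩
    have hbdd : BddBelow (Gset K X ε δ) :=
      ⟨0, fun R hR => (Gset_pos hK hε0 hδ0 hεδ hR).le⟩
    apply le_antisymm
    · rw [hG]
      refine le_csInf h2 (fun R hR => ?_)
      have : ∀ η > (0:ℝ), RoptStar K X ε δ ≤ R + η := fun η hη =>
        csInf_le ⟨0, fun r hr => hr.1⟩
          (ach X hK hε0 hδ0 hεδ hR (Gset_pos hK hε0 hδ0 hεδ hR) η hη)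
      by_contra hlt
      push_neg at hlt
      have := this ((RoptStar K X ε δ - R)/2) (by linarith)
      linarith
    · rw [hG]
      refine le_csInf h1 (fun R hR => ?_)
      have : ∀ R' > R, sInf (Gset K X ε δ) ≤ R' := fun R' hR' =>
        csInf_le hbdd (conv hK hδ0 hεδ hR R' hR')
      by_contra hlt
      push_neg at hlt
      have := this ((sInf (Gset K X ε δ) + R)/2) (by linarith)
      linarith
  · have h2 : ¬ (Gset K X ε δ).Nonempty := by
      rintro ⟨R, hR⟩
      exact h1 ⟨R + 1, ach X hK hε0 hδ0 hεδ hR (Gset_pos hK hε0 hδ0 hεδ hR) 1 one_pos⟩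
    rw [Set.not_nonempty_iff_eq_empty] at h1 h2
    rw [hG, RoptStar, ← hS1, h1, h2]
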